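/- arXiv:2412.07361 — 4 statements merged into one kernel-verified Lean document; each statement's English description precedes it below -/
import Mathlib

section
/- Let H be a real Hilbert space, let S ⊆ H, and let f : H → H be quasi-dissipative on S with constant a ≥ 0. Let Φ : ℝ → H → H be a flow such that for every z ∈ S the curve t ↦ Φ(t, z) takes values in S, is differentiable on [0,1] with derivative f(Φ(t, z)), and Φ(0, z) = z. Let γ be a measure on H × H concentrated on S × S such that (z₁, z₂) ↦ Φ(t, z₁) and (z₁, z₂) ↦ Φ(t, z₂) are measurable for each t and (z₁, z₂) ↦ ‖z₁ − z₂‖² is γ-integrable. Then for every t ∈ [0,1], ∫ ‖Φ(t, z₁) − Φ(t, z₂)‖² dγ(z₁, z₂) ≤ exp(2a·t) · ∫ ‖z₁ − z₂‖² dγ(z₁, z₂). -/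
open scoped RealInnerProductSpace
open MeasureTheory

lemma pointwise_contraction
    {H : Type*} [NormedAddCommGroup H] [InnerProductSpace ℝ H]
    (S : Set H) (f : H → H) (a : ℝ)
    (hqd : ∀ z₁ ∈ S, ∀ z₂ ∈ S, ⟪z₁ - z₂, f z₁ - f z₂⟫ ≤ a * ‖z₁ - z₂‖ ^ 2)
    (Φ : ℝ → H → H)
    (hmem : ∀ z ∈ S, ∀ t ∈ Set.Icc (0 : ℝ) 1, Φ t z ∈ S)
    (hderiv : ∀ z ∈ S, ∀ t ∈ Set.Icc (0 : ℝ) 1,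
      HasDerivAt (fun s => Φ s z) (f (Φ t z)) t)
    (h0 : ∀ z ∈ S, Φ 0 z = z)
    {z₁ z₂ : H} (hz₁ : z₁ ∈ S) (hz₂ : z₂ ∈ S) {t : ℝ} (ht : t ∈ Set.Icc (0:ℝ) 1) :
    ‖Φ t z₁ - Φ t z₂‖ ^ 2 ≤ Real.exp (2 * a * t) * ‖z₁ - z₂‖ ^ 2 := by
  set ψ : ℝ → ℝ := fun s => Real.exp (-(2 * a * s)) * ‖Φ s z₁ - Φ s z₂‖ ^ 2 with hψ
  have hD : ∀ s ∈ Set.Icc (0:ℝ) 1, HasDerivAt ψ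
      (Real.exp (-(2 * a * s)) * (-(2 * a)) * ‖Φ s z₁ - Φ s z₂‖ ^ 2 +
        Real.exp (-(2 * a * s)) *
          (2 * ⟪Φ s z₁ - Φ s z₂, f (Φ s z₁) - f (Φ s z₂)⟫)) s := by
    intro s hs
    have hu : HasDerivAt (fun r => Φ r z₁ - Φ r z₂)
        (f (Φ s z₁) - f (Φ s z₂)) s := (hderiv z₁ hz₁ s hs).sub (hderiv z₂ hz₂ s hs)
    have hφ : HasDerivAt (fun r => ‖Φ r z₁ - Φ r z₂‖ ^ 2)
        (2 * ⟪Φ s z₁ - Φ s z₂, f (Φ s z₁) - f (Φ s z₂)⟫) s := by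
      have h1 : HasDerivAt (fun r => ⟪Φ r z₁ - Φ r z₂, Φ r z₁ - Φ r z₂⟫)
          (⟪Φ s z₁ - Φ s z₂, f (Φ s z₁) - f (Φ s z₂)⟫ +
            ⟪f (Φ s z₁) - f (Φ s z₂), Φ s z₁ - Φ s z₂⟫) s := hu.inner ℝ hu
      have heq : (fun r => ⟪Φ r z₁ - Φ r z₂, Φ r z₁ - Φ r z₂⟫)
          = (fun r => ‖Φ r z₁ - Φ r z₂‖ ^ 2) := by
        funext r; rw [real_inner_self_eq_norm_sq]
      rw [heq] at h1
      convert h1 using 1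
      rw [real_inner_comm (f (Φ s z₁) - f (Φ s z₂))]; ring
    have he : HasDerivAt (fun r => Real.exp (-(2 * a * r)))
        (Real.exp (-(2 * a * s)) * (-(2 * a))) s := by
      have : HasDerivAt (fun r : ℝ => -(2 * a * r)) (-(2 * a)) s := by
        have h := ((hasDerivAt_id s).const_mul (2 * a)).neg
        rw [mul_one] at h
        exact h
      exact this.exp
    exact he.mul hφ
  have hanti : AntitoneOn ψ (Set.Icc (0:ℝ) 1) := by
    apply antitoneOn_of_deriv_nonpos (convex_Icc 0 1)
    · exact fun s hs => (hD s hs).continuousAt.continuousWithinAt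
    · intro s hs
      rw [interior_Icc] at hs
      exact (hD s (Set.mem_Icc_of_Ioo hs)).differentiableAt.differentiableWithinAt
    · intro s hs
      rw [interior_Icc] at hs
      have hs' := Set.mem_Icc_of_Ioo hs
      rw [(hD s hs').deriv]
      have hq := hqd _ (hmem z₁ hz₁ s hs') _ (hmem z₂ hz₂ s hs')
      have hpos := Real.exp_pos (-(2 * a * s))
      nlinarith [hpos]
  have h0' : ψ 0 = ‖z₁ - z₂‖ ^ 2 := by
    simp [hψ, h0 z₁ hz₁, h0 z₂ hz₂]
  have := hanti (Set.left_mem_Icc.mpr zero_le_one) ht ht.1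
  rw [h0'] at this
  have hpos := Real.exp_pos (2 * a * t)
  have h2 : Real.exp (-(2*a*t)) * ‖Φ t z₁ - Φ t z₂‖ ^ 2 ≤ ‖z₁ - z₂‖ ^ 2 := this
  calc ‖Φ t z₁ - Φ t z₂‖ ^ 2
      = Real.exp (2*a*t) * (Real.exp (-(2*a*t)) * ‖Φ t z₁ - Φ t z₂‖ ^ 2) := by
        rw [← mul_assoc, ← Real.exp_add]; simp
    _ ≤ Real.exp (2*a*t) * ‖z₁ - z₂‖ ^ 2 := mul_le_mul_of_nonneg_left h2 hpos.le
/-- Coupling-level contraction estimate (Theorem 5.1 of the paper): for a flow `Φ` of the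
quasi-dissipative evolution equation `ẏ = f(y)` on a set `S`, and any coupling `γ`
concentrated on `S × S`, the squared transport cost contracts at rate `e^{2 a t}`. -/
theorem coupling_contraction
    {H : Type*} [NormedAddCommGroup H] [InnerProductSpace ℝ H] [CompleteSpace H]
    [MeasurableSpace H] [BorelSpace H]
    (S : Set H) (f : H → H) (a : ℝ) (ha : 0 ≤ a)
    (hqd : ∀ z₁ ∈ S, ∀ z₂ ∈ S, ⟪z₁ - z₂, f z₁ - f z₂⟫ ≤ a * ‖z₁ - z₂‖ ^ 2)
    (Φ : ℝ → H → H)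
    (hmem : ∀ z ∈ S, ∀ t ∈ Set.Icc (0 : ℝ) 1, Φ t z ∈ S)
    (hderiv : ∀ z ∈ S, ∀ t ∈ Set.Icc (0 : ℝ) 1,
      HasDerivAt (fun s => Φ s z) (f (Φ t z)) t)
    (h0 : ∀ z ∈ S, Φ 0 z = z)
    (γ : Measure (H × H))
    (hconc : ∀ᵐ p ∂γ, p.1 ∈ S ∧ p.2 ∈ S)
    (hmeas₁ : ∀ t : ℝ, Measurable fun p : H × H => Φ t p.1)
    (hmeas₂ : ∀ t : ℝ, Measurable fun p : H × H => Φ t p.2)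
    (hint : Integrable (fun p : H × H => ‖p.1 - p.2‖ ^ 2) γ) :
    ∀ t ∈ Set.Icc (0 : ℝ) 1,
      ∫ p, ‖Φ t p.1 - Φ t p.2‖ ^ 2 ∂γ ≤
        Real.exp (2 * a * t) * ∫ p, ‖p.1 - p.2‖ ^ 2 ∂γ := by
  intro t ht
  have key : ∀ᵐ p ∂γ, ‖Φ t p.1 - Φ t p.2‖ ^ 2 ≤ Real.exp (2 * a * t) * ‖p.1 - p.2‖ ^ 2 :=
    hconc.mono fun p hp =>
      pointwise_contraction S f a hqd Φ hmem hderiv h0 hp.1 hp.2 ht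
  calc ∫ p, ‖Φ t p.1 - Φ t p.2‖ ^ 2 ∂γ
      ≤ ∫ p, Real.exp (2 * a * t) * ‖p.1 - p.2‖ ^ 2 ∂γ :=
        integral_mono_of_nonneg (Filter.Eventually.of_forall fun p => by positivity)
          (hint.const_mul _) key
    _ = Real.exp (2 * a * t) * ∫ p, ‖p.1 - p.2‖ ^ 2 ∂γ := integral_const_mul _ _
end

section
/- Let g : ℝ → ℝ be continuous and let y_max ∈ ℝ satisfy g(s) ≤ 0 for all s ≥ y_max. Let y : ℝ × ℝ → ℝ be twice continuously differentiable, periodic in its second argument with period 1 (y(t, x+1) = y(t, x)), and satisfy the reaction-diffusion equation ∂_t y(t,x) = ∂_{xx} y(t,x) + g(y(t,x)) for all t ∈ [0,1] and x ∈ ℝ. If y(0,x) ≤ y_max for all x ∈ ℝ, then y(t,x) ≤ y_max for all t ∈ [0,1] and all x ∈ ℝ. -/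
open Set Filter Topology

lemma aux_deriv_nonneg_of_isMaxOn_right {u : ℝ → ℝ} {b d : ℝ} (hb : 0 < b)
    (hder : HasDerivAt u d b) (hmax : IsMaxOn u (Set.Icc 0 b) b) : 0 ≤ d := by
  have hcone : (0:ℝ) - b ∈ posTangentConeAt (Set.Icc 0 b) b := by
    apply sub_mem_posTangentConeAt_of_segment_subset
    rw [segment_symm, segment_eq_Icc hb.le]
  have h := hmax.localize.hasFDerivWithinAt_nonpos hder.hasFDerivAt.hasFDerivWithinAt hcone
  simp only [ContinuousLinearMap.toSpanSingleton_apply,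
    smul_eq_mul] at h
  nlinarith

lemma aux_second_deriv_nonpos {h : ℝ → ℝ} {x0 : ℝ}
    (hd : Differentiable ℝ h) (hd2 : DifferentiableAt ℝ (deriv h) x0)
    (hmax : ∀ x, h x ≤ h x0) : deriv (deriv h) x0 ≤ 0 := by
  by_contra hpos
  push_neg at hpos
  have hloc : IsLocalMax h x0 := Filter.Eventually.of_forall hmax
  have h1 : deriv h x0 = 0 := hloc.deriv_eq_zero
  have hs : Tendsto (fun c => deriv h c / (c - x0)) (𝓝[>] x0) (𝓝 (deriv (deriv h) x0)) := by
    have := hasDerivAt_iff_tendsto_slope.1 hd2.hasDerivAt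
    have h2 : Tendsto (slope (deriv h) x0) (𝓝[>] x0) (𝓝 (deriv (deriv h) x0)) :=
      this.mono_left (nhdsWithin_mono _ (fun c hc => ne_of_gt hc))
    refine h2.congr' ?_
    filter_upwards with c
    simp [slope_def_field, h1]
  have hf : ∃ᶠ c in 𝓝[>] x0, deriv h c ≤ 0 := by
    rw [Filter.frequently_iff]
    intro U hU
    rcases mem_nhdsGT_iff_exists_Ioo_subset.1 hU with ⟨u, hu, hsub⟩
    have hx0u : x0 < u := hu
    set m := (x0 + u) / 2 with hm
    have hx0m : x0 < m := by simp [hm]; linarith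
    have hmu : m < u := by simp [hm]; linarith
    obtain ⟨c, hc, hceq⟩ := exists_deriv_eq_slope h hx0m
      (hd.continuous.continuousOn) (hd.differentiableOn)
    refine ⟨c, hsub ⟨hc.1, lt_trans hc.2 hmu⟩, ?_⟩
    rw [hceq]
    apply div_nonpos_of_nonpos_of_nonneg
    · linarith [hmax m]
    · linarith
  have hev : ∀ᶠ c in 𝓝[>] x0, 0 < deriv h c / (c - x0) :=
    hs.eventually (eventually_gt_nhds hpos)
  have hmem : ∀ᶠ c in 𝓝[>] x0, x0 < c := eventually_mem_nhdsWithin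
  rcases (hf.and_eventually (hev.and hmem)).exists with ⟨c, hc1, hc2, hc3⟩
  have : deriv h c / (c - x0) ≤ 0 := div_nonpos_of_nonpos_of_nonneg hc1 (by linarith)
  linarith

/-- Upper-bound half of the positive invariance result (Lemma 3.3 of the paper): a classical
periodic solution of the reaction-diffusion equation `∂_t y = ∂_{xx} y + g(y)` that starts
below `y_max` stays below `y_max`, provided `g(s) ≤ 0` for `s ≥ y_max`. -/
theorem reaction_diffusion_upper_invariance
    (g : ℝ → ℝ) (hg : Continuous g) (ymax : ℝ)
    (hgneg : ∀ s : ℝ, ymax ≤ s → g s ≤ 0)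
    (y : ℝ → ℝ → ℝ)
    (hy : ContDiff ℝ 2 (Function.uncurry y))
    (hper : ∀ t x : ℝ, y t (x + 1) = y t x)
    (hpde : ∀ t ∈ Set.Icc (0:ℝ) 1, ∀ x : ℝ,
      deriv (fun s => y s x) t = deriv (deriv (y t)) x + g (y t x))
    (hinit : ∀ x : ℝ, y 0 x ≤ ymax) :
    ∀ t ∈ Set.Icc (0:ℝ) 1, ∀ x : ℝ, y t x ≤ ymax := by
  -- basic differentiability facts
  have hyd : Differentiable ℝ (Function.uncurry y) := hy.differentiable (by norm_num)
  have hcont : Continuous (Function.uncurry y) := hyd.continuous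
  have hslice_t : ∀ (x t : ℝ), DifferentiableAt ℝ (fun s => y s x) t := by
    intro x t
    exact (hyd (t, x)).comp t (DifferentiableAt.prodMk (differentiableAt_id : DifferentiableAt ℝ id t) (differentiableAt_const x))
  have hslice_x : ∀ t : ℝ, ContDiff ℝ 2 (y t) := by
    intro t
    exact hy.comp ((contDiff_const.prodMk contDiff_id))
  intro t0 ht0 x0
  -- reduce to x0 ∈ [0,1] via periodicity
  have hper' : ∀ t : ℝ, Function.Periodic (y t) 1 := fun t x => hper t x
  have hfract : ∀ t x : ℝ, y t x = y t (Int.fract x) := by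
    intro t x
    have h1 := (hper' t).sub_int_mul_eq (x := x) (n := ⌊x⌋)
    have h2 : Int.fract x = x - ⌊x⌋ * 1 := by rw [mul_one, Int.self_sub_floor]
    rw [h2]
    exact h1.symm
  -- main estimate with ε
  have key : ∀ ε : ℝ, 0 < ε → y t0 x0 ≤ ymax + ε := by
    intro ε hε
    set f : ℝ × ℝ → ℝ := fun p => y p.1 p.2 - ε * p.1 with hf
    have hfc : Continuous f := (hcont.sub (continuous_const.mul continuous_fst))
    have hK : IsCompact (Set.Icc (0:ℝ) t0 ×ˢ Set.Icc (0:ℝ) 1) :=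
      isCompact_Icc.prod isCompact_Icc
    have hne : (Set.Icc (0:ℝ) t0 ×ˢ Set.Icc (0:ℝ) 1).Nonempty :=
      ⟨(0, 0), by constructor <;> simp [ht0.1]⟩
    obtain ⟨p, hpK, hpmax⟩ := hK.exists_isMaxOn hne hfc.continuousOn
    obtain ⟨t₁, x₁⟩ := p
    have ht₁ : t₁ ∈ Set.Icc (0:ℝ) t0 := hpK.1
    have hx₁ : x₁ ∈ Set.Icc (0:ℝ) 1 := hpK.2
    -- key claim : the max value of f is ≤ ymax
    have hmaxle : y t₁ x₁ - ε * t₁ ≤ ymax := by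
      by_contra hb
      push_neg at hb
      have ht₁pos : 0 < t₁ := by
        rcases lt_or_eq_of_le ht₁.1 with h | h
        · exact h
        · exfalso; rw [← h] at hb; simp at hb; linarith [hinit x₁]
      have hyge : ymax ≤ y t₁ x₁ := by nlinarith [ht₁.1]
      -- spatial: y t₁ has a global max at x₁
      have hmaxh : ∀ x : ℝ, y t₁ x ≤ y t₁ x₁ := by
        intro x
        rw [hfract t₁ x]
        have hx : Int.fract x ∈ Set.Icc (0:ℝ) 1 :=
          ⟨Int.fract_nonneg x, (Int.fract_lt_one x).le⟩
        have := hpmax (Set.mk_mem_prod ht₁ hx)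
        simp only [hf, Set.mem_setOf_eq] at this
        linarith
      have hh2 : ContDiff ℝ 2 (y t₁) := hslice_x t₁
      have hhdiff : Differentiable ℝ (y t₁) := hh2.differentiable (by norm_num)
      have hhd2 : Differentiable ℝ (deriv (y t₁)) := by
        have h21 : (2 : WithTop ℕ∞) = 1 + 1 := by norm_num
        rw [h21, contDiff_succ_iff_deriv] at hh2
        exact hh2.2.2.differentiable one_ne_zero
      have hsecond : deriv (deriv (y t₁)) x₁ ≤ 0 :=
        aux_second_deriv_nonpos hhdiff (hhd2 x₁) hmaxh
      -- temporal: deriv ≥ ε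
      have hu : HasDerivAt (fun s => y s x₁ - ε * s)
          (deriv (fun s => y s x₁) t₁ - ε) t₁ := by
        have h1 : HasDerivAt (fun s => y s x₁) (deriv (fun s => y s x₁) t₁) t₁ :=
          (hslice_t x₁ t₁).hasDerivAt
        have h2 : HasDerivAt (fun s : ℝ => ε * s) ε t₁ := by
          simpa using (hasDerivAt_id t₁).const_mul ε
        exact h1.sub h2
      have humax : IsMaxOn (fun s => y s x₁ - ε * s) (Set.Icc 0 t₁) t₁ := by
        intro s hs
        have hsK : (s, x₁) ∈ Set.Icc (0:ℝ) t0 ×ˢ Set.Icc (0:ℝ) 1 :=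
          Set.mk_mem_prod ⟨hs.1, le_trans hs.2 ht₁.2⟩ hx₁
        exact hpmax hsK
      have hdt : 0 ≤ deriv (fun s => y s x₁) t₁ - ε :=
        aux_deriv_nonneg_of_isMaxOn_right ht₁pos hu humax
      -- PDE
      have ht₁01 : t₁ ∈ Set.Icc (0:ℝ) 1 := ⟨ht₁.1, le_trans ht₁.2 ht0.2⟩
      have hpde' := hpde t₁ ht₁01 x₁
      have hgle : g (y t₁ x₁) ≤ 0 := hgneg _ hyge
      linarith
    -- conclude
    have hx0 : Int.fract x0 ∈ Set.Icc (0:ℝ) 1 :=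
      ⟨Int.fract_nonneg x0, (Int.fract_lt_one x0).le⟩
    have h0 := hpmax (Set.mk_mem_prod (Set.right_mem_Icc.2 ht0.1) hx0)
    simp only [hf, Set.mem_setOf_eq] at h0
    rw [hfract t0 x0]
    have : ε * t0 ≤ ε := by nlinarith [ht0.2]
    linarith
  by_contra hcon
  push_neg at hcon
  have := key ((y t0 x0 - ymax) / 2) (by linarith)
  linarith
end

section
/- Let g : ℝ → ℝ be continuous and let y_min ∈ ℝ satisfy g(s) ≥ 0 for all s ≤ y_min. Let y : ℝ × ℝ → ℝ be twice continuously differentiable, periodic in its second argument with period 1 (y(t, x+1) = y(t, x)), and satisfy the reaction-diffusion equation ∂_t y(t,x) = ∂_{xx} y(t,x) + g(y(t,x)) for all t ∈ [0,1] and x ∈ ℝ. If y(0,x) ≥ y_min for all x ∈ ℝ, then y(t,x) ≥ y_min for all t ∈ [0,1] and all x ∈ ℝ. -/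
open Filter Set Topology

/-- If `f t0 < f t` for all `t` in an interval just left of `t0`, the derivative at `t0` is `≤ 0`. -/
lemma left_deriv_nonpos {f : ℝ → ℝ} {c a t0 : ℝ} (h : HasDerivAt f c t0)
    (ha : a < t0) (hf : ∀ t ∈ Set.Ico a t0, f t0 < f t) : c ≤ 0 := by
  have hs : Tendsto (slope f t0) (𝓝[≠] t0) (𝓝 c) := hasDerivAt_iff_tendsto_slope.mp h
  have h2 : Tendsto (slope f t0) (𝓝[<] t0) (𝓝 c) :=
    hs.mono_left (nhdsWithin_mono _ (fun x hx => ne_of_lt hx))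
  refine le_of_tendsto h2 ?_
  filter_upwards [Ioo_mem_nhdsLT ha] with t ht
  have h1 : f t0 < f t := hf t ⟨ht.1.le, ht.2⟩
  have h3 : t - t0 < 0 := sub_neg.mpr ht.2
  rw [slope_def_field]
  exact le_of_lt (div_neg_of_pos_of_neg (by linarith) h3)

/-- Second derivative is nonnegative at a local minimum of a `C²` function. -/
lemma second_deriv_nonneg_of_isLocalMin {f : ℝ → ℝ} {x0 : ℝ}
    (hf : ContDiff ℝ 2 f) (hm : IsLocalMin f x0) : 0 ≤ deriv (deriv f) x0 := by
  by_contra hneg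
  push_neg at hneg
  have hd1 : deriv f x0 = 0 := hm.deriv_eq_zero
  have hf' : ContDiff ℝ 1 (deriv f) := by
    have := (contDiff_succ_iff_deriv (n := 1)).mp (by exact_mod_cast hf)
    exact this.2.2
  have h2 : HasDerivAt (deriv f) (deriv (deriv f) x0) x0 :=
    ((hf'.differentiable one_ne_zero) x0).hasDerivAt
  have hs : Tendsto (slope (deriv f) x0) (𝓝[≠] x0) (𝓝 (deriv (deriv f) x0)) :=
    hasDerivAt_iff_tendsto_slope.mp h2
  have hev : ∀ᶠ t in 𝓝[>] x0, slope (deriv f) x0 t < 0 :=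
    (hs.mono_left (nhdsWithin_mono _ (fun x hx => ne_of_gt hx))).eventually
      (Iio_mem_nhds hneg)
  have hev2 : ∀ᶠ t in 𝓝[>] x0, deriv f t < 0 := by
    filter_upwards [hev, self_mem_nhdsWithin] with t ht ht'
    have h3 : (0:ℝ) < t - x0 := sub_pos.mpr ht'
    have : slope (deriv f) x0 t = deriv f t / (t - x0) := by
      rw [slope_def_field, hd1]; ring
    rw [this] at ht
    by_contra hcon
    push_neg at hcon
    exact absurd ht (not_lt.mpr (div_nonneg hcon h3.le))
  obtain ⟨b, hb, hsub⟩ := mem_nhdsGT_iff_exists_Ioo_subset.mp hev2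
  obtain ⟨δ, hδ, hmin⟩ := Metric.eventually_nhds_iff.mp hm
  set b' : ℝ := min b (x0 + δ/2) with hb'def
  have hb0 : x0 < b' := lt_min hb (by linarith)
  have hanti : StrictAntiOn f (Set.Icc x0 b') := by
    apply strictAntiOn_of_deriv_neg (convex_Icc _ _) (hf.continuous.continuousOn)
    intro t ht
    rw [interior_Icc] at ht
    exact hsub ⟨ht.1, lt_of_lt_of_le ht.2 (min_le_left _ _)⟩
  have h4 : f b' < f x0 :=
    hanti ⟨le_refl _, hb0.le⟩ ⟨hb0.le, le_refl _⟩ hb0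
  have h5 : f x0 ≤ f b' := by
    apply hmin
    have : b' - x0 ≤ δ/2 := by
      have := min_le_right b (x0 + δ/2); linarith [hb'def ▸ this]
    rw [Real.dist_eq, abs_of_pos (sub_pos.mpr hb0)]
    linarith
  linarith

/-- Lower-bound half of the positive invariance result (Lemma 3.3 of the paper): a classical
periodic solution of the reaction-diffusion equation `∂_t y = ∂_{xx} y + g(y)` that starts
above `y_min` stays above `y_min`, provided `g(s) ≥ 0` for `s ≤ y_min`. -/
theorem reaction_diffusion_lower_invariance
    (g : ℝ → ℝ) (hg : Continuous g) (ymin : ℝ)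
    (hgpos : ∀ s : ℝ, s ≤ ymin → 0 ≤ g s)
    (y : ℝ → ℝ → ℝ)
    (hy : ContDiff ℝ 2 (Function.uncurry y))
    (hper : ∀ t x : ℝ, y t (x + 1) = y t x)
    (hpde : ∀ t ∈ Set.Icc (0:ℝ) 1, ∀ x : ℝ,
      deriv (fun s => y s x) t = deriv (deriv (y t)) x + g (y t x))
    (hinit : ∀ x : ℝ, ymin ≤ y 0 x) :
    ∀ t ∈ Set.Icc (0:ℝ) 1, ∀ x : ℝ, ymin ≤ y t x := by
  have hcont : Continuous (fun p : ℝ × ℝ => y p.1 p.2) := hy.continuous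
  have key : ∀ ε : ℝ, 0 < ε → ∀ t ∈ Set.Icc (0:ℝ) 1, ∀ x : ℝ,
      0 < y t x - ymin + ε * (1 + t) := by
    intro ε hε
    by_contra hcon
    push_neg at hcon
    obtain ⟨t1, ht1, x1, hx1⟩ := hcon
    set F : ℝ → ℝ → ℝ := fun t x => y t x - ymin + ε * (1 + t) with hFdef
    -- periodicity of F in x
    have hperF : ∀ t x : ℝ, F t (Int.fract x) = F t x := by
      intro t x
      have hp : Function.Periodic (y t) 1 := hper t
      have h0 : y t (x - (⌊x⌋ : ℤ) • (1:ℝ)) = y t x := hp.sub_zsmul_eq ⌊x⌋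
      rw [zsmul_eq_mul, mul_one] at h0
      simp only [hFdef]
      rw [show Int.fract x = x - (⌊x⌋ : ℝ) from rfl, h0]
    have hFcont : Continuous (fun p : ℝ × ℝ => F p.1 p.2) := by
      exact (hcont.sub continuous_const).add
        (continuous_const.mul (continuous_const.add continuous_fst))
    -- the "bad" compact set
    set K : Set (ℝ × ℝ) := ((Set.Icc (0:ℝ) 1) ×ˢ (Set.Icc (0:ℝ) 1)) ∩ {p | F p.1 p.2 ≤ 0}
      with hKdef
    have hKc : IsCompact K :=
      (isCompact_Icc.prod isCompact_Icc).inter_right (isClosed_le hFcont continuous_const)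
    have hKne : K.Nonempty := by
      refine ⟨(t1, Int.fract x1), ⟨⟨ht1, ?_⟩, ?_⟩⟩
      · exact ⟨Int.fract_nonneg x1, (Int.fract_lt_one x1).le⟩
      · simpa [hperF] using hx1
    obtain ⟨p0, hp0K, hp0min⟩ := hKc.exists_isMinOn hKne continuous_fst.continuousOn
    set t0 : ℝ := p0.1 with ht0def
    set x0 : ℝ := p0.2 with hx0def
    have ht0mem : t0 ∈ Set.Icc (0:ℝ) 1 := hp0K.1.1
    have hx0F : F t0 x0 ≤ 0 := hp0K.2
    have hF0 : ∀ x : ℝ, 0 < F 0 x := by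
      intro x
      have := hinit x
      simp only [hFdef]
      nlinarith
    have ht0pos : 0 < t0 := by
      rcases lt_or_eq_of_le ht0mem.1 with h | h
      · exact h
      · exfalso; rw [← h] at hx0F; exact absurd hx0F (not_le.mpr (hF0 x0))
    -- F is positive strictly before time t0
    have hbefore : ∀ t : ℝ, 0 ≤ t → t < t0 → ∀ x : ℝ, 0 < F t x := by
      intro t ht htlt x
      rw [← hperF]
      by_contra hc
      push_neg at hc
      have hmem : (t, Int.fract x) ∈ K := by
        refine ⟨⟨⟨ht, le_trans htlt.le ht0mem.2⟩, ?_⟩, hc⟩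
        exact ⟨Int.fract_nonneg x, (Int.fract_lt_one x).le⟩
      exact absurd (hp0min hmem) (not_le.mpr htlt)
    -- by continuity, F is nonnegative at time t0
    have hge : ∀ x : ℝ, 0 ≤ F t0 x := by
      intro x
      have hctx : Continuous (fun t => F t x) := by
        exact ((hcont.comp (continuous_id.prodMk continuous_const)).sub
          continuous_const).add (continuous_const.mul (continuous_const.add continuous_id))
      have htd : Tendsto (fun t => F t x) (𝓝[<] t0) (𝓝 (F t0 x)) :=
        (hctx.tendsto t0).mono_left nhdsWithin_le_nhds
      refine ge_of_tendsto htd ?_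
      filter_upwards [Ioo_mem_nhdsLT ht0pos] with t ht
      exact (hbefore t ht.1.le ht.2 x).le
    have hFt0x0 : F t0 x0 = 0 := le_antisymm hx0F (hge x0)
    -- x0 is a global minimum of y t0
    have hmin : IsLocalMin (y t0) x0 := by
      apply Filter.Eventually.of_forall
      intro x
      have h1 := hge x
      simp only [hFdef] at h1 hFt0x0
      linarith
    have hC2x : ContDiff ℝ 2 (y t0) := hy.comp (ContDiff.prodMk contDiff_const contDiff_id)
    have hsecond : 0 ≤ deriv (deriv (y t0)) x0 := second_deriv_nonneg_of_isLocalMin hC2x hmin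
    have hylow : y t0 x0 ≤ ymin := by
      simp only [hFdef] at hFt0x0
      nlinarith [ht0pos]
    have hgge : 0 ≤ g (y t0 x0) := hgpos _ hylow
    -- time derivative
    have hdiff : Differentiable ℝ (fun s => y s x0) :=
      (hy.comp (ContDiff.prodMk contDiff_id contDiff_const)).differentiable two_ne_zero
    have h1 : HasDerivAt (fun s => y s x0) (deriv (fun s => y s x0) t0) t0 :=
      (hdiff t0).hasDerivAt
    have h2 : HasDerivAt (fun t : ℝ => ε * (1 + t)) ε t0 := by
      simpa using (((hasDerivAt_id t0).const_add (1:ℝ)).const_mul ε)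
    have hF' : HasDerivAt (fun t => F t x0) (deriv (fun s => y s x0) t0 + ε) t0 :=
      (h1.sub_const ymin).add h2
    have hle : deriv (fun s => y s x0) t0 + ε ≤ 0 := by
      apply left_deriv_nonpos hF' ht0pos
      intro t ht
      rw [hFt0x0]
      exact hbefore t ht.1 ht.2 x0
    have hpde0 := hpde t0 ht0mem x0
    linarith [hpde0 ▸ (add_nonneg hsecond hgge)]
  -- conclude by letting ε → 0
  intro t ht x
  by_contra hlt
  push_neg at hlt
  have hε : 0 < (ymin - y t x) / 3 := by linarith
  have := key _ hε t ht x
  nlinarith [ht.2, ht.1]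
end

section
/- Let H be a real Hilbert space, f : H → H a Borel measurable map, and let Φ : ℝ → H → H be such that (t, z) ↦ Φ(t, z) is continuous, Φ(0, z) = z for all z, and for every z ∈ H the curve t ↦ Φ(t, z) is differentiable on [0,1] with derivative f(Φ(t, z)). Let μ₀ be a Borel probability measure on H, and let φ : ℝ × H → ℝ be continuously (Fréchet) differentiable such that φ, its time derivative ∂_t φ, and the operator norm of its space derivative D_z φ are uniformly bounded. Assume moreover that ∫₀¹ ∫_H ‖f(Φ(t, z))‖ dμ₀(z) dt < ∞. Then, writing μ_t for the push-forward of μ₀ under z ↦ Φ(t, z), ∫₀¹ ∫_H ( ∂_t φ(t, z) + D_z φ(t, z)(f(z)) ) dμ_t(z) dt = ∫_H φ(1, z) dμ₁(z) − ∫_H φ(0, z) dμ₀(z). -/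
open MeasureTheory

/-- The push-forward computation of Section 4 of the paper: the push-forward
`μ_t = Φ(t,·)_# μ₀` of an initial probability measure through the solution flow of
`ẏ = f(y)` solves the Liouville equation in weak (test-function) form. -/
theorem pushforward_solves_liouville
    {H : Type*} [NormedAddCommGroup H] [InnerProductSpace ℝ H] [CompleteSpace H]
    [MeasurableSpace H] [BorelSpace H]
    (f : H → H) (hf : Measurable f)
    (Φ : ℝ → H → H)
    (hΦcont : Continuous fun p : ℝ × H => Φ p.1 p.2)
    (hΦ0 : ∀ z : H, Φ 0 z = z)
    (hΦderiv : ∀ z : H, ∀ t ∈ Set.Icc (0:ℝ) 1, HasDerivAt (fun s => Φ s z) (f (Φ t z)) t)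
    (μ₀ : Measure H) [IsProbabilityMeasure μ₀]
    (φ : ℝ × H → ℝ) (hφ : ContDiff ℝ 1 φ)
    (C : ℝ)
    (hφbdd : ∀ (t : ℝ) (z : H), |φ (t, z)| ≤ C)
    (hφtbdd : ∀ (t : ℝ) (z : H), |deriv (fun s => φ (s, z)) t| ≤ C)
    (hφzbdd : ∀ (t : ℝ) (z : H), ‖fderiv ℝ (fun w => φ (t, w)) z‖ ≤ C)
    (hfint : Integrable (fun p : ℝ × H => ‖f (Φ p.1 p.2)‖)
      ((volume.restrict (Set.Icc (0:ℝ) 1)).prod μ₀)) :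
    (∫ t in (0:ℝ)..1, ∫ z,
        (deriv (fun s => φ (s, z)) t + fderiv ℝ (fun w => φ (t, w)) z (f z))
          ∂(μ₀.map (Φ t))) =
      (∫ z, φ (1, z) ∂(μ₀.map (Φ 1))) - ∫ z, φ (0, z) ∂μ₀ := by
  classical
  have hφd : Differentiable ℝ φ := hφ.differentiable one_ne_zero
  have hFc : Continuous (fderiv ℝ φ) := hφ.continuous_fderiv one_ne_zero
  -- continuous approximations of f via difference quotients
  set g : ℕ → H → H := fun n z =>
    (((n : ℝ) + 1)⁻¹)⁻¹ • (Φ (((n : ℝ) + 1)⁻¹) z - Φ 0 z) with hgdef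
  have hgc : ∀ n, Continuous (g n) := by
    intro n
    have h1 : Continuous fun z : H => Φ (((n : ℝ) + 1)⁻¹) z :=
      hΦcont.comp (continuous_const.prodMk continuous_id)
    have h2 : Continuous fun z : H => Φ 0 z :=
      hΦcont.comp (continuous_const.prodMk continuous_id)
    exact continuous_const.smul (h1.sub h2)
  have hgtend : ∀ w : H, Filter.Tendsto (fun n => g n w) Filter.atTop (nhds (f w)) := by
    intro w
    have h0 : HasDerivAt (fun s => Φ s w) (f (Φ 0 w)) 0 :=
      hΦderiv w 0 ⟨le_refl 0, zero_le_one⟩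
    rw [hΦ0 w] at h0
    have hs := hasDerivAt_iff_tendsto_slope.mp h0
    have hseq : Filter.Tendsto (fun n : ℕ => ((n : ℝ) + 1)⁻¹) Filter.atTop
        (nhdsWithin (0 : ℝ) {(0:ℝ)}ᶜ) := by
      apply tendsto_nhdsWithin_of_tendsto_nhds_of_eventually_within
      · simpa [one_div] using tendsto_one_div_add_atTop_nhds_zero_nat (𝕜 := ℝ)
      · exact Filter.Eventually.of_forall fun n => by
          simp only [Set.mem_compl_iff, Set.mem_singleton_iff]
          positivity
    have hcomp := hs.comp hseq
    convert hcomp using 2 with n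
    simp [hgdef, slope_def_field, slope, vsub_eq_sub]
  have hev : ∀ q : ℝ × H, Continuous fun v : H => fderiv ℝ φ q (1, v) :=
    fun q => (fderiv ℝ φ q).continuous.comp (continuous_const.prodMk continuous_id)
  -- (a): time derivative via full Fréchet derivative
  have ha : ∀ (t : ℝ) (z : H),
      HasDerivAt (fun s => φ (s, z)) (fderiv ℝ φ (t, z) (1, 0)) t := by
    intro t z
    have h1 : HasDerivAt (fun s : ℝ => (s, z)) ((1:ℝ), (0:H)) t :=
      (hasDerivAt_id t).prodMk (hasDerivAt_const t z)
    exact (hφd (t, z)).hasFDerivAt.comp_hasDerivAt t h1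
  -- (b): space derivative via full Fréchet derivative
  have hb : ∀ (t : ℝ) (z : H),
      HasFDerivAt (fun w => φ (t, w))
        ((fderiv ℝ φ (t, z)).comp (ContinuousLinearMap.inr ℝ ℝ H)) z := fun t z =>
    (hφd (t, z)).hasFDerivAt.comp z (hasFDerivAt_prodMk_right t z)
  -- rewriting of the integrand
  have hG : ∀ (t : ℝ) (z : H),
      deriv (fun s => φ (s, z)) t + fderiv ℝ (fun w => φ (t, w)) z (f z)
        = fderiv ℝ φ (t, z) (1, f z) := by
    intro t z
    rw [(ha t z).deriv, (hb t z).fderiv]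
    have h1 : ((1:ℝ), f z) = ((1:ℝ), (0:H)) + ((0:ℝ), f z) := by simp
    rw [h1, map_add]
    simp
  -- measurability of the integrand (sections)
  have hGm : ∀ t : ℝ, Measurable (fun z : H => fderiv ℝ φ (t, z) (1, f z)) := by
    intro t
    apply measurable_of_tendsto_metrizable
      (f := fun n (z : H) => fderiv ℝ φ (t, z) (1, g n z))
    · intro n
      exact (isBoundedBilinearMap_apply.continuous.comp
        ((hFc.comp (continuous_const.prodMk continuous_id)).prodMk
          (continuous_const.prodMk (hgc n)))).measurable
    · rw [tendsto_pi_nhds]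
      intro z
      exact ((hev (t, z)).tendsto (f z)).comp (hgtend z)
  -- pointwise bound
  have hGbd : ∀ (t : ℝ) (w : H),
      |fderiv ℝ φ (t, w) (1, f w)| ≤ C + C * ‖f w‖ := by
    intro t w
    have h1 : ((1:ℝ), f w) = ((1:ℝ), (0:H)) + ((0:ℝ), f w) := by simp
    rw [h1, map_add]
    refine (abs_add_le _ _).trans (add_le_add ?_ ?_)
    · rw [← (ha t w).deriv]; exact hφtbdd t w
    · have h2 : fderiv ℝ φ (t, w) ((0:ℝ), f w)
          = fderiv ℝ (fun v => φ (t, v)) w (f w) := by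
        rw [(hb t w).fderiv]; simp
      rw [h2]
      calc |fderiv ℝ (fun v => φ (t, v)) w (f w)|
          ≤ ‖fderiv ℝ (fun v => φ (t, v)) w‖ * ‖f w‖ :=
            (fderiv ℝ (fun v => φ (t, v)) w).le_opNorm (f w)
        _ ≤ C * ‖f w‖ :=
            mul_le_mul_of_nonneg_right (hφzbdd t w) (norm_nonneg _)
  -- the composed integrand
  set ψ : ℝ × H → ℝ :=
    fun p => fderiv ℝ φ (p.1, Φ p.1 p.2) (1, f (Φ p.1 p.2)) with hψdef
  have hψm : Measurable ψ := by
    apply measurable_of_tendsto_metrizable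
      (f := fun n (p : ℝ × H) => fderiv ℝ φ (p.1, Φ p.1 p.2) (1, g n (Φ p.1 p.2)))
    · intro n
      exact (isBoundedBilinearMap_apply.continuous.comp
        ((hFc.comp (continuous_fst.prodMk hΦcont)).prodMk
          (continuous_const.prodMk ((hgc n).comp hΦcont)))).measurable
    · rw [tendsto_pi_nhds]
      intro p
      exact ((hev (p.1, Φ p.1 p.2)).tendsto (f (Φ p.1 p.2))).comp (hgtend (Φ p.1 p.2))
  haveI : IsFiniteMeasure (volume.restrict (Set.Icc (0:ℝ) 1)) := by
    constructor
    rw [Measure.restrict_apply_univ, Real.volume_Icc]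
    simp
  have hψint : Integrable ψ ((volume.restrict (Set.Icc (0:ℝ) 1)).prod μ₀) := by
    refine Integrable.mono' ((integrable_const C).add (hfint.const_mul C))
      hψm.aestronglyMeasurable ?_
    refine Filter.Eventually.of_forall fun p => ?_
    simpa [Real.norm_eq_abs] using hGbd p.1 (Φ p.1 p.2)
  -- Step 1 : rewrite the inner integral as an integral w.r.t. μ₀
  have hΦtm : ∀ t : ℝ, Measurable (Φ t) := fun t =>
    (hΦcont.comp (continuous_const.prodMk continuous_id)).measurable
  have hstep1 : ∀ t : ℝ,
      (∫ z, (deriv (fun s => φ (s, z)) t + fderiv ℝ (fun w => φ (t, w)) z (f z))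
        ∂(μ₀.map (Φ t))) = ∫ z, ψ (t, z) ∂μ₀ := by
    intro t
    have h1 : (fun z : H => deriv (fun s => φ (s, z)) t
        + fderiv ℝ (fun w => φ (t, w)) z (f z))
        = fun z : H => fderiv ℝ φ (t, z) (1, f z) := funext fun z => hG t z
    rw [h1]
    exact integral_map (hΦtm t).aemeasurable (hGm t).aestronglyMeasurable
  have hLHS : (∫ t in (0:ℝ)..1, ∫ z,
      (deriv (fun s => φ (s, z)) t + fderiv ℝ (fun w => φ (t, w)) z (f z))
        ∂(μ₀.map (Φ t))) = ∫ t in Set.Icc (0:ℝ) 1, ∫ z, ψ (t, z) ∂μ₀ := by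
    rw [intervalIntegral.integral_of_le zero_le_one,
      ← MeasureTheory.integral_Icc_eq_integral_Ioc]
    exact setIntegral_congr_fun measurableSet_Icc fun t _ => hstep1 t
  rw [hLHS]
  -- Fubini
  have hswap : (∫ t in Set.Icc (0:ℝ) 1, ∫ z, ψ (t, z) ∂μ₀)
      = ∫ z, (∫ t in Set.Icc (0:ℝ) 1, ψ (t, z)) ∂μ₀ :=
    MeasureTheory.integral_integral_swap hψint
  rw [hswap]
  -- FTC a.e.
  have hae : ∀ᵐ z ∂μ₀, (∫ t in Set.Icc (0:ℝ) 1, ψ (t, z))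
      = φ (1, Φ 1 z) - φ (0, z) := by
    filter_upwards [hψint.prod_left_ae] with z hz
    have hIcc : (∫ t in Set.Icc (0:ℝ) 1, ψ (t, z))
        = ∫ t in (0:ℝ)..1, ψ (t, z) := by
      rw [MeasureTheory.integral_Icc_eq_integral_Ioc,
        intervalIntegral.integral_of_le zero_le_one]
    rw [hIcc]
    have hd : ∀ t ∈ Set.uIcc (0:ℝ) 1,
        HasDerivAt (fun s => φ (s, Φ s z)) (ψ (t, z)) t := by
      intro t ht
      rw [Set.uIcc_of_le zero_le_one] at ht
      have h1 : HasDerivAt (fun s : ℝ => ((s, Φ s z) : ℝ × H))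
          ((1:ℝ), f (Φ t z)) t := (hasDerivAt_id t).prodMk (hΦderiv z t ht)
      exact (hφd (t, Φ t z)).hasFDerivAt.comp_hasDerivAt t h1
    have hint : IntervalIntegrable (fun t => ψ (t, z)) volume 0 1 := by
      rw [intervalIntegrable_iff_integrableOn_Ioc_of_le zero_le_one]
      exact IntegrableOn.mono_set hz Set.Ioc_subset_Icc_self
    have := intervalIntegral.integral_eq_sub_of_hasDerivAt hd hint
    rw [this, hΦ0 z]
  rw [integral_congr_ae hae]
  -- split and push forward
  have hi1 : Integrable (fun z => φ (1, Φ 1 z)) μ₀ := by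
    refine Integrable.mono' (integrable_const C)
      ((hφ.continuous.comp (continuous_const.prodMk
        (hΦcont.comp (continuous_const.prodMk continuous_id)))).aestronglyMeasurable) ?_
    exact Filter.Eventually.of_forall fun z => by
      simpa [Real.norm_eq_abs] using hφbdd 1 (Φ 1 z)
  have hi0 : Integrable (fun z => φ (0, z)) μ₀ := by
    refine Integrable.mono' (integrable_const C)
      ((hφ.continuous.comp (continuous_const.prodMk continuous_id)).aestronglyMeasurable) ?_
    exact Filter.Eventually.of_forall fun z => by
      simpa [Real.norm_eq_abs] using hφbdd 0 z
  rw [integral_sub hi1 hi0]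
  congr 1
  exact (integral_map (hΦtm 1).aemeasurable
    ((hφ.continuous.comp (continuous_const.prodMk continuous_id)).aestronglyMeasurable)).symm
end
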